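/- Approximation bound chain (Shannon-based): for a ∈ (1/2,1) and probability vector w with positive entries, H_α(w) ≤ L_a^h(w) ≤ L_a^ā(w) ≤ L_a^s̃(w) < 1 + L_a^s(w) < 2 + H_α(w), where l^s are the Shannon-like lengths l^s(i) = ⌈-α log₂ w(i) + log₂ Σ_j w(j)^α⌉, L_a^s(w) = L_a(w, l^s), and L_a^s̃(w) is the cost of the alphabetic code obtained from l^s by the minimal-point adjustment and cleanup. -/

import Mathlib

open Real Finset

/-- Full binary tree: every internal node has two children. -/
inductive BTree where
  | leaf : BTree
  | node : BTree → BTree → BTree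

namespace BTree

/-- Depths of the leaves, read in left-to-right (inorder) order. -/
def depths : BTree → List ℕ
  | leaf => [0]
  | node l r => (l.depths ++ r.depths).map (· + 1)

/-- Number of leaves. -/
def numLeaves (t : BTree) : ℕ := t.depths.length

/-- The splitting point: smallest (1-based) leaf index of the right subtree. -/
def splitPoint : BTree → ℕ
  | leaf => 1
  | node l _ => l.numLeaves + 1

end BTree

/-- Binary tree possibly having single-child internal nodes. -/
inductive PTree where
  | leaf : PTree
  | node1 : PTree → PTree
  | node2 : PTree → PTree → PTree

def PTree.depths : PTree → List ℕ
  | .leaf => [0]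
  | .node1 t => t.depths.map (· + 1)
  | .node2 l r => (l.depths ++ r.depths).map (· + 1)

/-- `SubtreeAt t' o t` : `t'` is a subtree of `t` whose leaves are the leaves
`o, o+1, …` (0-based offset `o`) of `t`. -/
inductive SubtreeAt : BTree → ℕ → BTree → Prop
  | refl (t : BTree) : SubtreeAt t 0 t
  | left {t' : BTree} {o : ℕ} {l r : BTree} : SubtreeAt t' o l → SubtreeAt t' o (BTree.node l r)
  | right {t' : BTree} {o : ℕ} {l r : BTree} : SubtreeAt t' o r →
      SubtreeAt t' (l.numLeaves + o) (BTree.node l r)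

/-- Weighted exponential cost `∑ w(i)·a^{l(i)}` of a tree, weights given as a list. -/
noncomputable def cost (a : ℝ) (ws : List ℝ) (t : BTree) : ℝ :=
  (List.zipWith (fun wi d => wi * a ^ d) ws t.depths).sum

/-- `L_a(w,l) = log_a ∑ w(i) a^{l(i)}`, `Fin`-indexed. -/
noncomputable def La {n : ℕ} (a : ℝ) (w : Fin n → ℝ) (l : Fin n → ℕ) : ℝ :=
  Real.logb a (∑ i, w i * a ^ (l i))

/-- `L_a(w,l)`, ℕ-indexed with `n` symbols. -/
noncomputable def LaN (a : ℝ) (n : ℕ) (w : ℕ → ℝ) (l : ℕ → ℕ) : ℝ :=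
  Real.logb a (∑ i ∈ Finset.range n, w i * a ^ (l i))

/-- Costs achievable by alphabetic binary trees on `n` leaves with weights `w`. -/
noncomputable def AlphaSet (a : ℝ) (n : ℕ) (w : ℕ → ℝ) : Set ℝ :=
  {x | ∃ (lT : ℕ → ℕ) (T : BTree), T.depths = (List.range n).map lT ∧ x = LaN a n w lT}

/-- The indices `j..j+k` form a plateau of `l` which is a strict local minimum,
with strictly larger values at indices `j-1` and `j+k+1`, entirely interior to `0..n-1`. -/
def PlateauMin (n : ℕ) (l : ℕ → ℕ) (j k : ℕ) : Prop :=
  0 < j ∧ j + k + 1 < n ∧ l j < l (j - 1) ∧ (∀ m, j ≤ m → m ≤ j + k → l m = l j) ∧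
    l j < l (j + k + 1)

/-- The natural number a binary codeword (MSB first) represents. -/
def codeToNat (c : List Bool) : ℕ := c.foldl (fun n b => 2 * n + cond b 1 0) 0

/-- The `k`-bit binary codeword (MSB first) representing `m`. -/
def natToCode (k m : ℕ) : List Bool := (List.range k).map (fun i => m.testBit (k - 1 - i))


/-! ### Auxiliary lemmas -/

private lemma listSumMapRange (n : ℕ) (g : ℕ → ℝ) :
    ((List.range n).map g).sum = ∑ i ∈ Finset.range n, g i := by
  induction n with
  | zero => simp
  | succ m ih =>
      rw [List.range_succ, List.map_append, List.sum_append, Finset.sum_range_succ, ih]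
      simp

private lemma btree_kraft (t : BTree) :
    (t.depths.map fun d => ((2:ℝ) ^ d)⁻¹).sum = 1 := by
  induction t with
  | leaf => simp [BTree.depths]
  | node l r ihl ihr =>
      have key : ∀ L : List ℕ, ((L.map (· + 1)).map fun d => ((2:ℝ) ^ d)⁻¹).sum
          = 2⁻¹ * (L.map fun d => ((2:ℝ) ^ d)⁻¹).sum := by
        intro L
        induction L with
        | nil => simp
        | cons x xs ih =>
            simp only [List.map_cons, List.sum_cons, ih, pow_succ, mul_inv]
            ring
      simp only [BTree.depths]
      rw [key, List.map_append, List.sum_append, ihl, ihr]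
      norm_num

/-- the Shannon-based approximation bound chain
`H_α ≤ L_a^h ≤ L_a^ā ≤ L_a^s̃ < 1 + L_a^s < 2 + H_α`, where `ls` are the
Shannon-like lengths and the approximation tree's depths `lap` are dominated by
`ls` incremented only at interior minimal points `M` of `ls`. -/
theorem stmt13 (n : ℕ) (hn : 0 < n) (a : ℝ) (ha : 1 / 2 < a) (ha1 : a < 1)
    (w : ℕ → ℝ) (hw : ∀ i < n, 0 < w i) (hsum : ∑ i ∈ Finset.range n, w i = 1)
    (α : ℝ) (hα : α = 1 / (1 + Real.logb 2 a))
    (Hα : ℝ) (hH : Hα = (1 / (1 - α)) * Real.logb 2 (∑ i ∈ Finset.range n, w i ^ α))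
    (ls : ℕ → ℕ)
    (hls : ∀ i < n, ls i = (⌈-α * Real.logb 2 (w i) +
      Real.logb 2 (∑ j ∈ Finset.range n, w j ^ α)⌉ : ℤ).toNat)
    (lh : ℕ → ℕ) (hlhK : ∑ i ∈ Finset.range n, ((2 : ℝ) ^ lh i)⁻¹ ≤ 1)
    (hlhOpt : ∀ l : ℕ → ℕ, (∑ i ∈ Finset.range n, ((2 : ℝ) ^ l i)⁻¹ ≤ 1) →
      LaN a n w lh ≤ LaN a n w l)
    (Lab : ℝ) (hLab : IsLeast (AlphaSet a n w) Lab)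
    (M : Finset ℕ)
    (hM1 : ∀ i ∈ M, ∃ j k, PlateauMin n ls j k ∧ j ≤ i ∧ i ≤ j + k)
    (hM2 : ∀ j k, PlateauMin n ls j k → ∃! i, i ∈ M ∧ j ≤ i ∧ i ≤ j + k)
    (lap : ℕ → ℕ) (T : BTree) (hT : T.depths = (List.range n).map lap)
    (hle : ∀ i < n, lap i ≤ (if i ∈ M then ls i + 1 else ls i)) :
    Hα ≤ LaN a n w lh ∧ LaN a n w lh ≤ Lab ∧ Lab ≤ LaN a n w lap ∧
    LaN a n w lap < 1 + LaN a n w ls ∧ 1 + LaN a n w ls < 2 + Hα := by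
  classical
  have ha0 : (0:ℝ) < a := by linarith
  have h2pos : (0:ℝ) < 2 := by norm_num
  set β : ℝ := Real.logb 2 a with hβ
  have hβneg : β < 0 := Real.logb_neg one_lt_two ha0 ha1
  have hβne : β ≠ 0 := ne_of_lt hβneg
  have hhalf : Real.logb 2 (1/2 : ℝ) = -1 := by
    rw [one_div, Real.logb_inv, Real.logb_self_eq_one] <;> norm_num
  have hβgt : -1 < β := by
    have := Real.logb_lt_logb (b := 2) one_lt_two (by norm_num : (0:ℝ) < 1/2) ha
    rw [hhalf] at this; exact this
  have h1β : 0 < 1 + β := by linarith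
  have hαeq : α = 1 / (1 + β) := hα
  have hα1 : 1 < α := by
    rw [hαeq, lt_div_iff₀ h1β]; linarith
  have hα0 : 0 < α := by linarith
  have hαβ : α * (1 + β) = 1 := by
    rw [hαeq]; field_simp
  have hαβ' : α * β = 1 - α := by
    have h1 : α + α * β = 1 := by rw [← hαβ]; ring
    linarith
  have hαinv : α⁻¹ = 1 + β := by
    rw [hαeq, one_div, inv_inv]
  have ha2β : (2:ℝ) ^ β = a := Real.rpow_logb h2pos (by norm_num) ha0
  have hpow : ∀ m : ℕ, (a:ℝ) ^ m = (2:ℝ) ^ (β * (m:ℝ)) := by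
    intro m
    rw [Real.rpow_mul (le_of_lt h2pos), ha2β, Real.rpow_natCast]
  have h2pow : ∀ m : ℕ, ((2:ℝ) ^ m)⁻¹ = (2:ℝ) ^ (-(m:ℝ)) := by
    intro m
    rw [Real.rpow_neg (le_of_lt h2pos), Real.rpow_natCast]
  have hlog2 : Real.log 2 ≠ 0 := by
    have := Real.log_pos one_lt_two; linarith
  have hloga : Real.log a < 0 := Real.log_neg ha0 ha1
  have hlogb2 : ∀ x : ℝ, Real.logb a x = Real.logb 2 x / β := by
    intro x
    simp only [Real.logb, hβ]
    field_simp
  -- basic positivity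
  set S : ℝ := ∑ i ∈ Finset.range n, w i ^ α with hSdef
  have hS0 : 0 < S := Finset.sum_pos
    (fun i hi => Real.rpow_pos_of_pos (hw i (Finset.mem_range.mp hi)) α)
    (Finset.nonempty_range_iff.mpr hn.ne')
  have hApos : ∀ l : ℕ → ℕ, 0 < ∑ i ∈ Finset.range n, w i * a ^ l i := by
    intro l
    exact Finset.sum_pos
      (fun i hi => mul_pos (hw i (Finset.mem_range.mp hi)) (pow_pos ha0 _))
      (Finset.nonempty_range_iff.mpr hn.ne')
  -- Hα in terms of logb a
  have hHα : Hα = α⁻¹ * Real.logb a S := by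
    rw [hH, hlogb2, ← hαβ']
    field_simp
    try ring
  ---------------------------------------------------------------- Part 1
  have part1 : Hα ≤ LaN a n w lh := by
    set q : ℝ := -β⁻¹ with hqdef
    have hq0 : 0 < q := by
      rw [hqdef]; simp only [neg_pos]; exact inv_neg''.mpr hβneg
    have hconj : Real.HolderConjugate α q := by
      refine Real.holderConjugate_iff.mpr ⟨hα1, ?_⟩
      rw [hαinv, hqdef, neg_inv, inv_inv]
      ring
    have hHold := Real.inner_le_Lp_mul_Lq_of_nonneg (Finset.range n) hconj
      (f := w) (g := fun i => (2:ℝ) ^ (β * (lh i : ℝ)))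
      (fun i hi => (hw i (Finset.mem_range.mp hi)).le)
      (fun i _ => (Real.rpow_pos_of_pos h2pos _).le)
    have hgq : ∀ i : ℕ, ((2:ℝ) ^ (β * (lh i : ℝ))) ^ q = ((2:ℝ) ^ lh i)⁻¹ := by
      intro i
      rw [← Real.rpow_natCast 2 (lh i), ← Real.rpow_neg (le_of_lt h2pos),
        ← Real.rpow_mul (le_of_lt h2pos)]
      congr 1
      rw [hqdef]
      field_simp [hβne]
      try ring
    have hsum_q : ∑ i ∈ Finset.range n, ((2:ℝ) ^ (β * (lh i : ℝ))) ^ q ≤ 1 := by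
      calc ∑ i ∈ Finset.range n, ((2:ℝ) ^ (β * (lh i : ℝ))) ^ q
          = ∑ i ∈ Finset.range n, ((2:ℝ) ^ lh i)⁻¹ := by
            exact Finset.sum_congr rfl fun i _ => hgq i
        _ ≤ 1 := hlhK
    have hA_eq : ∑ i ∈ Finset.range n, w i * a ^ lh i
        = ∑ i ∈ Finset.range n, w i * (2:ℝ) ^ (β * (lh i : ℝ)) := by
      exact Finset.sum_congr rfl fun i _ => by rw [hpow]
    have hfac2 : (∑ i ∈ Finset.range n, ((2:ℝ) ^ (β * (lh i : ℝ))) ^ q) ^ (1/q) ≤ 1 :=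
      Real.rpow_le_one
        (Finset.sum_nonneg fun i _ => Real.rpow_nonneg (Real.rpow_nonneg (le_of_lt h2pos) _) q)
        hsum_q (by positivity)
    have hAS : ∑ i ∈ Finset.range n, w i * a ^ lh i ≤ S ^ (1/α) := by
      rw [hA_eq]
      calc ∑ i ∈ Finset.range n, w i * (2:ℝ) ^ (β * (lh i : ℝ))
          ≤ (∑ i ∈ Finset.range n, w i ^ α) ^ (1/α) *
            (∑ i ∈ Finset.range n, ((2:ℝ) ^ (β * (lh i : ℝ))) ^ q) ^ (1/q) := hHold
        _ ≤ (∑ i ∈ Finset.range n, w i ^ α) ^ (1/α) * 1 := by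
            apply mul_le_mul_of_nonneg_left hfac2
            exact Real.rpow_nonneg (le_of_lt hS0) _
        _ = S ^ (1/α) := by rw [mul_one, hSdef]
    have hlog := (Real.logb_le_logb_of_base_lt_one ha0 ha1
      (Real.rpow_pos_of_pos hS0 (1/α)) (hApos lh)).mpr hAS
    have : Real.logb a (S ^ (1/α)) = α⁻¹ * Real.logb a S := by
      rw [Real.logb_rpow_eq_mul_logb_of_pos hS0, one_div]
    rw [this] at hlog
    rw [hHα]
    exact hlog.trans_eq rfl
  ---------------------------------------------------------------- Part 2
  have part2 : LaN a n w lh ≤ Lab := by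
    obtain ⟨lT, T', hT', hx⟩ := hLab.1
    have hk : ∑ i ∈ Finset.range n, ((2:ℝ) ^ lT i)⁻¹ ≤ 1 := by
      have := btree_kraft T'
      rw [hT', List.map_map] at this
      have h2 : ((List.range n).map fun i => ((2:ℝ) ^ lT i)⁻¹).sum = 1 := this
      rw [listSumMapRange] at h2
      rw [h2]
    rw [hx]
    exact hlhOpt lT hk
  ---------------------------------------------------------------- Part 3
  have part3 : Lab ≤ LaN a n w lap := hLab.2 ⟨lap, T, hT, rfl⟩
  ---------------------------------------------------------------- Part 4
  have h0M : 0 ∉ M := by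
    intro h0
    obtain ⟨j, k, hpl, hj0, _⟩ := hM1 0 h0
    obtain ⟨hj, -, -, -, -⟩ := hpl
    omega
  have hstep : ∀ i ∈ Finset.range n, a * (w i * a ^ ls i) ≤ w i * a ^ lap i := by
    intro i hi
    have hi' := Finset.mem_range.mp hi
    have h1 : lap i ≤ ls i + 1 := by
      have := hle i hi'
      by_cases hM : i ∈ M
      · simpa [hM] using this
      · simp only [hM, if_false] at this; omega
    calc a * (w i * a ^ ls i) = w i * a ^ (ls i + 1) := by rw [pow_succ]; ring
      _ ≤ w i * a ^ lap i :=
          mul_le_mul_of_nonneg_left (pow_le_pow_of_le_one ha0.le ha1.le h1)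
            (hw i hi').le
  have hstrict0 : a * (w 0 * a ^ ls 0) < w 0 * a ^ lap 0 := by
    have h1 : lap 0 ≤ ls 0 := by
      have := hle 0 hn
      simpa [h0M] using this
    have h2 : a ^ (ls 0 + 1) < a ^ lap 0 :=
      pow_lt_pow_right_of_lt_one₀ ha0 ha1 (by omega)
    calc a * (w 0 * a ^ ls 0) = w 0 * a ^ (ls 0 + 1) := by rw [pow_succ]; ring
      _ < w 0 * a ^ lap 0 := by
          exact mul_lt_mul_of_pos_left h2 (hw 0 hn)
  have hsumlt : a * ∑ i ∈ Finset.range n, w i * a ^ ls i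
      < ∑ i ∈ Finset.range n, w i * a ^ lap i := by
    rw [Finset.mul_sum]
    exact Finset.sum_lt_sum hstep ⟨0, Finset.mem_range.mpr hn, hstrict0⟩
  have hlogaa : Real.logb a a = 1 := by
    simp only [Real.logb]
    exact div_self hloga.ne
  have part4 : LaN a n w lap < 1 + LaN a n w ls := by
    have hpos : 0 < a * ∑ i ∈ Finset.range n, w i * a ^ ls i := mul_pos ha0 (hApos ls)
    have := Real.logb_lt_logb_of_base_lt_one ha0 ha1 hpos hsumlt
    rw [Real.logb_mul ha0.ne' (hApos ls).ne', hlogaa] at this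
    exact this
  ---------------------------------------------------------------- Part 5
  have part5 : LaN a n w ls < 1 + Hα := by
    have hterm : ∀ i ∈ Finset.range n, a * (w i ^ α * S ^ β) < w i * a ^ ls i := by
      intro i hi
      have hi' := Finset.mem_range.mp hi
      have hwi := hw i hi'
      have hwS : w i ^ α ≤ S :=
        Finset.single_le_sum (f := fun j => w j ^ α)
          (fun j hj => (Real.rpow_pos_of_pos (hw j (Finset.mem_range.mp hj)) α).le) hi
      have hlogwS : α * Real.logb 2 (w i) ≤ Real.logb 2 S := by
        have := Real.logb_le_logb_of_le (b := 2) one_lt_two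
          (Real.rpow_pos_of_pos hwi α) hwS
        rwa [Real.logb_rpow_eq_mul_logb_of_pos hwi] at this
      have hc0 : 0 ≤ -α * Real.logb 2 (w i) + Real.logb 2 S := by linarith
      have hceil : (ls i : ℝ) < (-α * Real.logb 2 (w i) + Real.logb 2 S) + 1 := by
        have htn := Int.toNat_of_nonneg (Int.ceil_nonneg hc0)
        have h1 : ((⌈-α * Real.logb 2 (w i) + Real.logb 2 S⌉.toNat : ℕ) : ℝ)
            = ((⌈-α * Real.logb 2 (w i) + Real.logb 2 S⌉ : ℤ) : ℝ) := by
          exact_mod_cast htn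
        rw [hls i hi', h1]
        exact Int.ceil_lt_add_one _
      have hexp : a ^ ((-α * Real.logb 2 (w i) + Real.logb 2 S) + 1)
          < (a : ℝ) ^ (ls i : ℕ) := by
        have := Real.rpow_lt_rpow_of_exponent_gt ha0 ha1 hceil
        rwa [Real.rpow_natCast] at this
      have hxα : 1 + -(α * β) = α := by linarith [hαβ']
      have hacai : w i * a ^ (-α * Real.logb 2 (w i) + Real.logb 2 S)
          = w i ^ α * S ^ β := by
        have e1 : a ^ (-α * Real.logb 2 (w i) + Real.logb 2 S)
            = (2:ℝ) ^ (β * (-α * Real.logb 2 (w i) + Real.logb 2 S)) := by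
          rw [Real.rpow_mul h2pos.le, ha2β]
        have e2 : β * (-α * Real.logb 2 (w i) + Real.logb 2 S)
            = Real.logb 2 (w i) * (-(α * β)) + Real.logb 2 S * β := by ring
        rw [e1, e2, Real.rpow_add h2pos,
          Real.rpow_mul h2pos.le, Real.rpow_mul h2pos.le,
          Real.rpow_logb h2pos (by norm_num) hwi,
          Real.rpow_logb h2pos (by norm_num) hS0,
          ← mul_assoc,
          ← Real.rpow_one_add' hwi.le (by rw [hxα]; exact hα0.ne'),
          hxα]
      calc a * (w i ^ α * S ^ β)
          = w i * (a * a ^ (-α * Real.logb 2 (w i) + Real.logb 2 S)) := by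
            rw [← hacai]; ring
        _ = w i * a ^ ((-α * Real.logb 2 (w i) + Real.logb 2 S) + 1) := by
            rw [Real.rpow_add_one ha0.ne']; ring
        _ < w i * a ^ (ls i : ℕ) := mul_lt_mul_of_pos_left hexp hwi
    have hsum5 : a * S ^ (1 + β) < ∑ i ∈ Finset.range n, w i * a ^ ls i := by
      have e : ∑ i ∈ Finset.range n, (a * (w i ^ α * S ^ β)) = a * S ^ (1 + β) := by
        rw [← Finset.mul_sum, ← Finset.sum_mul, ← hSdef,
          Real.rpow_add hS0, Real.rpow_one]
      calc a * S ^ (1 + β) = ∑ i ∈ Finset.range n, (a * (w i ^ α * S ^ β)) := e.symm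
        _ < ∑ i ∈ Finset.range n, w i * a ^ ls i :=
            Finset.sum_lt_sum_of_nonempty (Finset.nonempty_range_iff.mpr hn.ne') hterm
    have hpos5 : 0 < a * S ^ (1 + β) := mul_pos ha0 (Real.rpow_pos_of_pos hS0 _)
    have hlog5 := Real.logb_lt_logb_of_base_lt_one ha0 ha1 hpos5 hsum5
    rw [Real.logb_mul ha0.ne' (Real.rpow_pos_of_pos hS0 _).ne', hlogaa,
      Real.logb_rpow_eq_mul_logb_of_pos hS0] at hlog5
    have : (1 + β) * Real.logb a S = Hα := by
      rw [hHα, hαinv]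
    rw [this] at hlog5
    exact hlog5
  exact ⟨part1, part2, part3, part4, by linarith⟩
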